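/- The functions u(x,y) = (√3/2)(x² + y²) and u(x,y) = −(√3/2)(x² + y²) satisfy the vanishing-E₁ graph equation ((u_y+x)/D)D_x − ((u_x−y)/D)D_y − (1/6)(Δu − ((u_x−y)/D)D_x − ((u_y+x)/D)D_y)² − 1/2 = 0 at every point (x,y) ≠ (0,0), where D := ((u_x−y)² + (u_y+x)²)^{1/2} (for these functions D = 2(x²+y²)^{1/2} > 0 off the origin). -/

import Mathlib

/-- `D_u = ((u_x − y)² + (u_y + x)²)^{1/2}` for a graph `t = u(x,y)` in the Heisenberg
group. -/
noncomputable def Dgraph (u : ℝ × ℝ → ℝ) (p : ℝ × ℝ) : ℝ :=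
  Real.sqrt ((fderiv ℝ u p (1, 0) - p.2) ^ 2 + (fderiv ℝ u p (0, 1) + p.1) ^ 2)

/-- Left-hand side of the vanishing-E₁ graph equation
`((u_y+x)/D)D_x − ((u_x−y)/D)D_y − (1/6)(Δu − ((u_x−y)/D)D_x − ((u_y+x)/D)D_y)² − 1/2`. -/
noncomputable def E1lhs (u : ℝ × ℝ → ℝ) (p : ℝ × ℝ) : ℝ :=
  ((fderiv ℝ u p (0, 1) + p.1) / Dgraph u p) * fderiv ℝ (Dgraph u) p (1, 0)
    - ((fderiv ℝ u p (1, 0) - p.2) / Dgraph u p) * fderiv ℝ (Dgraph u) p (0, 1)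
    - (1 / 6) * ((fderiv ℝ (fun q => fderiv ℝ u q (1, 0)) p (1, 0)
          + fderiv ℝ (fun q => fderiv ℝ u q (0, 1)) p (0, 1))
        - ((fderiv ℝ u p (1, 0) - p.2) / Dgraph u p) * fderiv ℝ (Dgraph u) p (1, 0)
        - ((fderiv ℝ u p (0, 1) + p.1) / Dgraph u p) * fderiv ℝ (Dgraph u) p (0, 1)) ^ 2
    - 1 / 2

open Real ContinuousLinearMap

noncomputable def Lmap (a b : ℝ) : ℝ × ℝ →L[ℝ] ℝ :=
  a • ContinuousLinearMap.fst ℝ ℝ ℝ + b • ContinuousLinearMap.snd ℝ ℝ ℝ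

lemma hasFDeriv_sq (p : ℝ × ℝ) :
    HasFDerivAt (fun q : ℝ × ℝ => q.1 ^ 2 + q.2 ^ 2) (Lmap (2*p.1) (2*p.2)) p := by
  have h1 : HasFDerivAt (fun q : ℝ × ℝ => q.1 ^ 2)
      ((2*p.1) • ContinuousLinearMap.fst ℝ ℝ ℝ) p := by
    have := (hasFDerivAt_fst (𝕜 := ℝ) (p := p)).mul (hasFDerivAt_fst (𝕜 := ℝ) (p := p))
    simp only [pow_two]
    refine HasFDerivAt.congr_fderiv this ?_
    ext v <;> simp <;> ring
  have h2 : HasFDerivAt (fun q : ℝ × ℝ => q.2 ^ 2)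
      ((2*p.2) • ContinuousLinearMap.snd ℝ ℝ ℝ) p := by
    have := (hasFDerivAt_snd (𝕜 := ℝ) (p := p)).mul (hasFDerivAt_snd (𝕜 := ℝ) (p := p))
    simp only [pow_two]
    refine HasFDerivAt.congr_fderiv this ?_
    ext v <;> simp <;> ring
  exact h1.add h2

lemma hasFDeriv_u (c : ℝ) (p : ℝ × ℝ) :
    HasFDerivAt (fun q : ℝ × ℝ => c * (q.1 ^ 2 + q.2 ^ 2)) (Lmap (2*c*p.1) (2*c*p.2)) p := by
  have := (hasFDeriv_sq p).const_mul c
  refine HasFDerivAt.congr_fderiv this ?_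
  ext v <;> simp [Lmap] <;> ring

lemma Lmap_apply (a b : ℝ) (v : ℝ × ℝ) : Lmap a b v = a * v.1 + b * v.2 := by
  simp [Lmap]

lemma fderiv_u (c : ℝ) (p : ℝ × ℝ) :
    fderiv ℝ (fun q : ℝ × ℝ => c * (q.1 ^ 2 + q.2 ^ 2)) p = Lmap (2*c*p.1) (2*c*p.2) :=
  (hasFDeriv_u c p).fderiv

lemma Dgraph_eq (c : ℝ) (hc : c ^ 2 = 3/4) (p : ℝ × ℝ) :
    Dgraph (fun q : ℝ × ℝ => c * (q.1 ^ 2 + q.2 ^ 2)) p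
      = 2 * Real.sqrt (p.1 ^ 2 + p.2 ^ 2) := by
  rw [Dgraph, fderiv_u]
  have : (Lmap (2*c*p.1) (2*c*p.2) (1,0) - p.2) ^ 2
      + (Lmap (2*c*p.1) (2*c*p.2) (0,1) + p.1) ^ 2 = 4 * (p.1 ^ 2 + p.2 ^ 2) := by
    simp [Lmap_apply]; nlinarith [hc]
  rw [this]
  rw [show (4 : ℝ) * (p.1^2+p.2^2) = 2^2 * (p.1^2+p.2^2) by ring,
    Real.sqrt_mul (by positivity), Real.sqrt_sq (by norm_num)]

lemma hasFDeriv_D (c : ℝ) (hc : c ^ 2 = 3/4) (p : ℝ × ℝ) (hp : p ≠ 0) :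
    HasFDerivAt (Dgraph (fun q : ℝ × ℝ => c * (q.1 ^ 2 + q.2 ^ 2)))
      (Lmap (2*p.1 / Real.sqrt (p.1^2+p.2^2)) (2*p.2 / Real.sqrt (p.1^2+p.2^2))) p := by
  have hs : p.1 ^ 2 + p.2 ^ 2 ≠ 0 := by
    have : p.1 ≠ 0 ∨ p.2 ≠ 0 := by
      by_contra h; push_neg at h; exact hp (Prod.ext h.1 h.2)
    rcases this with h | h <;> positivity
  have hsqrt : HasDerivAt Real.sqrt (1 / (2 * Real.sqrt (p.1^2+p.2^2))) (p.1^2+p.2^2) :=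
    Real.hasDerivAt_sqrt hs
  have hcomp := (hsqrt.comp_hasFDerivAt p (hasFDeriv_sq p)).const_mul 2
  have heq : Dgraph (fun q : ℝ × ℝ => c * (q.1 ^ 2 + q.2 ^ 2))
      = fun q : ℝ × ℝ => 2 * Real.sqrt (q.1^2+q.2^2) := funext fun q => Dgraph_eq c hc q
  rw [heq]
  refine HasFDerivAt.congr_fderiv hcomp ?_
  have hr : Real.sqrt (p.1^2+p.2^2) ≠ 0 := by
    simpa [Real.sqrt_eq_zero'] using lt_of_le_of_ne (by positivity) (Ne.symm hs)
  ext v <;> simp [Lmap_apply] <;> field_simp <;> ring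

lemma E1_zero (c : ℝ) (hc : c ^ 2 = 3/4) (p : ℝ × ℝ) (hp : p ≠ 0) :
    E1lhs (fun q : ℝ × ℝ => c * (q.1 ^ 2 + q.2 ^ 2)) p = 0 := by
  have hs : 0 < p.1 ^ 2 + p.2 ^ 2 := by
    have : p.1 ≠ 0 ∨ p.2 ≠ 0 := by
      by_contra h; push_neg at h; exact hp (Prod.ext h.1 h.2)
    rcases this with h | h <;> positivity
  set r := Real.sqrt (p.1^2+p.2^2) with hrdef
  have hr0 : 0 < r := Real.sqrt_pos.mpr hs
  have hr2 : r ^ 2 = p.1 ^ 2 + p.2 ^ 2 := Real.sq_sqrt hs.le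
  have hu2 : (fun q : ℝ × ℝ => fderiv ℝ (fun q : ℝ × ℝ => c * (q.1 ^ 2 + q.2 ^ 2)) q (1,0))
      = fun q : ℝ × ℝ => 2*c*q.1 := by
    funext q; rw [fderiv_u]; simp [Lmap_apply]
  have hu3 : (fun q : ℝ × ℝ => fderiv ℝ (fun q : ℝ × ℝ => c * (q.1 ^ 2 + q.2 ^ 2)) q (0,1))
      = fun q : ℝ × ℝ => 2*c*q.2 := by
    funext q; rw [fderiv_u]; simp [Lmap_apply]
  have hxx : fderiv ℝ (fun q : ℝ × ℝ => 2*c*q.1) p (1,0) = 2*c := by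
    have : HasFDerivAt (fun q : ℝ × ℝ => 2*c*q.1)
        ((2*c) • ContinuousLinearMap.fst ℝ ℝ ℝ) p :=
      (hasFDerivAt_fst (𝕜 := ℝ) (p := p)).const_mul (2*c)
    rw [this.fderiv]; simp
  have hyy : fderiv ℝ (fun q : ℝ × ℝ => 2*c*q.2) p (0,1) = 2*c := by
    have : HasFDerivAt (fun q : ℝ × ℝ => 2*c*q.2)
        ((2*c) • ContinuousLinearMap.snd ℝ ℝ ℝ) p :=
      (hasFDerivAt_snd (𝕜 := ℝ) (p := p)).const_mul (2*c)
    rw [this.fderiv]; simp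
  rw [E1lhs, fderiv_u, Dgraph_eq c hc, (hasFDeriv_D c hc p hp).fderiv, hu2, hu3, hxx, hyy]
  simp only [Lmap_apply, ← hrdef]
  have hr2' : r * r = p.1 ^ 2 + p.2 ^ 2 := by nlinarith [hr2]
  field_simp
  linear_combination (6*(p.1^2+p.2^2) - 32*c^2*(r*r) - 6*(r*r)) * hr2'
    + (-8*(p.1^2+p.2^2)^2) * hc

lemma hc_pos : (Real.sqrt 3 / 2) ^ 2 = 3/4 := by
  rw [div_pow, Real.sq_sqrt (by norm_num : (3:ℝ) ≥ 0)]; norm_num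

lemma hc_neg : (-(Real.sqrt 3 / 2)) ^ 2 = 3/4 := by
  rw [neg_pow, Even.neg_one_pow (by norm_num), one_mul]; exact hc_pos


/-- the functions `u = ±(√3/2)(x² + y²)` satisfy the vanishing-E₁ graph
equation off the origin; for these functions `D = 2(x²+y²)^{1/2} > 0` there. -/
theorem stmt_17 :
    (∀ p : ℝ × ℝ, p ≠ 0 →
        E1lhs (fun q => (Real.sqrt 3 / 2) * (q.1 ^ 2 + q.2 ^ 2)) p = 0)
    ∧ (∀ p : ℝ × ℝ, p ≠ 0 →
        E1lhs (fun q => -(Real.sqrt 3 / 2) * (q.1 ^ 2 + q.2 ^ 2)) p = 0)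
    ∧ (∀ p : ℝ × ℝ, p ≠ 0 →
        Dgraph (fun q => (Real.sqrt 3 / 2) * (q.1 ^ 2 + q.2 ^ 2)) p
            = 2 * Real.sqrt (p.1 ^ 2 + p.2 ^ 2)
          ∧ Dgraph (fun q => -(Real.sqrt 3 / 2) * (q.1 ^ 2 + q.2 ^ 2)) p
            = 2 * Real.sqrt (p.1 ^ 2 + p.2 ^ 2)
          ∧ 0 < Dgraph (fun q => (Real.sqrt 3 / 2) * (q.1 ^ 2 + q.2 ^ 2)) p) := by
  refine ⟨fun p hp => E1_zero _ hc_pos p hp, fun p hp => E1_zero _ hc_neg p hp,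
    fun p hp => ⟨Dgraph_eq _ hc_pos p, Dgraph_eq _ hc_neg p, ?_⟩⟩
  rw [Dgraph_eq _ hc_pos p]
  have hs : 0 < p.1 ^ 2 + p.2 ^ 2 := by
    have : p.1 ≠ 0 ∨ p.2 ≠ 0 := by
      by_contra h; push_neg at h; exact hp (Prod.ext h.1 h.2)
    rcases this with h | h <;> positivity
  positivity
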